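/- Let G=(V,E) be a finite connected undirected graph with positive conductances and marked vertex b. Under the probability measure P on two-component spanning forests proportional to weight, the second moment of the number of vertices of the floating component satisfies E(|Σ|²) = ℓ*·(|V|/(|V|−1))·E(τ_b), where ℓ* = κ(G)(|V|−1)/κ₂(G) and E(τ_b) = (1/|V|)·Σ_{u,v∈V} G_{u,v}. Equivalently, E(|Σ|²) = (κ(G)/κ₂(G))·Σ_{u,v∈V} G_{u,v}. -/

import Mathlib

open scoped Classical BigOperators

noncomputable section

namespace TwoSF

variable {V : Type*} [Fintype V] [DecidableEq V]

/-- `u` and `v` are linked by the edges in `B`. -/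
def Linked (B : Finset (Sym2 V)) : V → V → Prop :=
  Relation.ReflTransGen fun a b => s(a, b) ∈ B

/-- The number of connected components of the spanning subgraph `(V, B)`. -/
def ncomp (B : Finset (Sym2 V)) : ℕ :=
  Nat.card (Quot (Linked B))

/-- `B` is a spanning forest of the complete graph on `V` with exactly `k`
connected components: it has `k` components and, by the rank count
`|B| + k = |V|`, it is acyclic (in particular it contains no loop edge).
Taking `k = 1` gives spanning trees, `k = 2` gives two-component spanning
forests (2SF). -/
def IsSF (k : ℕ) (B : Finset (Sym2 V)) : Prop :=
  ncomp B = k ∧ B.card + k = Fintype.card V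

/-- The weight of an edge set: the product of its conductances. -/
def wt (c : Sym2 V → ℝ) (B : Finset (Sym2 V)) : ℝ := ∏ e ∈ B, c e

/-- κ: the weighted sum of spanning trees.  Edge sets containing a non-edge
(an `e` with `c e = 0`) contribute weight `0`, so this is the weighted number
of spanning trees of the graph whose edges are the support of `c`. -/
def kappa1 (c : Sym2 V → ℝ) : ℝ := ∑ B ∈ Finset.univ.filter (IsSF 1), wt c B

/-- κ₂: the weighted sum of two-component spanning forests. -/
def kappa2 (c : Sym2 V → ℝ) : ℝ := ∑ B ∈ Finset.univ.filter (IsSF 2), wt c B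

/-- The floating component of `B`: the set of vertices not linked to `b`. -/
def floating (b : V) (B : Finset (Sym2 V)) : Finset V :=
  Finset.univ.filter fun v => ¬ Linked B b v

/-- The graph Laplacian `Δ` of the graph with conductances `c`. -/
def lap (c : Sym2 V → ℝ) : Matrix V V ℝ := fun u v =>
  if u = v then ∑ w ∈ Finset.univ.filter (· ≠ u), c s(u, w) else -c s(u, v)

/-- The Dirichlet Laplacian `Δ_D`, indexed by `V \ {b}`. -/
def dlap (c : Sym2 V → ℝ) (b : V) : Matrix {w : V // w ≠ b} {w : V // w ≠ b} ℝ :=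
  Matrix.of fun p q => lap c p.1 q.1

/-- The Green function with Dirichlet boundary condition at `b` (the inverse of
the Dirichlet Laplacian), with the convention that it vanishes as soon as one
of its arguments is `b`. -/
def green (c : Sym2 V → ℝ) (b : V) (u v : V) : ℝ :=
  if hu : u = b then 0 else if hv : v = b then 0 else (dlap c b)⁻¹ ⟨u, hu⟩ ⟨v, hv⟩

/-- The probability of the event `p` under the probability measure on
two-component spanning forests assigning to each 2SF a probability
proportional to its weight. -/
def pr2 (c : Sym2 V → ℝ) (p : Finset (Sym2 V) → Prop) : ℝ :=
  (∑ B ∈ Finset.univ.filter (fun B => IsSF 2 B ∧ p B), wt c B) / kappa2 c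

/-- The expectation of `((floating b B).card : ℝ) ^ k`, i.e. of `|Σ|^k`, under
the probability measure on two-component spanning forests proportional to
weight. -/
def expPow (c : Sym2 V → ℝ) (b : V) (k : ℕ) : ℝ :=
  (∑ B ∈ Finset.univ.filter (IsSF 2), wt c B * ((floating b B).card : ℝ) ^ k) / kappa2 c

/-- `|∂Σ|`: the sum of the conductances of the edges having exactly one
endpoint in the floating component of `B`. -/
def bdryWt (c : Sym2 V → ℝ) (b : V) (B : Finset (Sym2 V)) : ℝ :=
  ∑ u ∈ floating b B, ∑ v ∈ (floating b B)ᶜ, c s(u, v)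

/-- The expectation of `|∂Σ|` under the probability measure on two-component
spanning forests proportional to weight. -/
def expBdry (c : Sym2 V → ℝ) (b : V) : ℝ :=
  (∑ B ∈ Finset.univ.filter (IsSF 2), wt c B * bdryWt c b B) / kappa2 c

set_option linter.unusedSectionVars false
set_option maxHeartbeats 1000000

variable {B B' T : Finset (Sym2 V)} {a c p q u v w x y z : V}

lemma linked_refl (B : Finset (Sym2 V)) (x : V) : Linked B x x := Relation.ReflTransGen.refl

lemma Linked.symm (h : Linked B x y) : Linked B y x := by
  refine (@Relation.ReflTransGen.stdSymm _ (fun a b => s(a, b) ∈ B) ⟨?_⟩).symm _ _ h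
  intro p q hpq
  rwa [Sym2.eq_swap] at hpq

lemma Linked.trans (h : Linked B x y) (h' : Linked B y z) : Linked B x z :=
  Relation.ReflTransGen.trans h h'

lemma linked_of_mem (h : s(x, y) ∈ B) : Linked B x y := Relation.ReflTransGen.single h

lemma Linked.mono (h : Linked B x y) (hBB : B ⊆ B') : Linked B' x y :=
  Relation.ReflTransGen.mono (fun _ _ hm => hBB hm) _ _ h

lemma Linked.closed {Z : V → Prop} (hZ : ∀ p q, s(p, q) ∈ B → (Z p ↔ Z q))
    (h : Linked B x y) (hx : Z x) : Z y := by
  induction h with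
  | refl => exact hx
  | tail _ hedge ih => exact (hZ _ _ hedge).mp ih

lemma linked_of_linked_of_edges (hE : ∀ p q, s(p, q) ∈ B' → Linked B p q)
    (h : Linked B' x y) : Linked B x y := by
  induction h with
  | refl => exact .refl
  | tail _ hedge ih => exact ih.trans (hE _ _ hedge)

lemma linked_insert_iff :
    Linked (insert s(a, c) B) z w ↔
      Linked B z w ∨ (Linked B z a ∧ Linked B c w) ∨ (Linked B z c ∧ Linked B a w) := by
  constructor
  · intro h
    induction h with
    | refl => exact Or.inl .refl
    | @tail m w hzm hedge ih =>
      rcases Finset.mem_insert.mp hedge with he | he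
      · rcases Sym2.eq_iff.mp he with ⟨rfl, rfl⟩ | ⟨rfl, rfl⟩
        · rcases ih with h1 | ⟨h1, h2⟩ | ⟨h1, h2⟩
          · exact Or.inr (Or.inl ⟨h1, .refl⟩)
          · exact Or.inr (Or.inl ⟨h1, .refl⟩)
          · exact Or.inl h1
        · rcases ih with h1 | ⟨h1, h2⟩ | ⟨h1, h2⟩
          · exact Or.inr (Or.inr ⟨h1, .refl⟩)
          · exact Or.inl h1
          · exact Or.inr (Or.inr ⟨h1, .refl⟩)
      · rcases ih with h1 | ⟨h1, h2⟩ | ⟨h1, h2⟩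
        · exact Or.inl (h1.tail he)
        · exact Or.inr (Or.inl ⟨h1, h2.tail he⟩)
        · exact Or.inr (Or.inr ⟨h1, h2.tail he⟩)
  · rintro (h | ⟨h1, h2⟩ | ⟨h1, h2⟩)
    · exact h.mono (Finset.subset_insert _ _)
    · exact ((h1.mono (Finset.subset_insert _ _)).trans
        (linked_of_mem (Finset.mem_insert_self _ _))).trans (h2.mono (Finset.subset_insert _ _))
    · exact ((h1.mono (Finset.subset_insert _ _)).trans
        (linked_of_mem (Finset.mem_insert_self _ _)).symm).trans (h2.mono (Finset.subset_insert _ _))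

lemma linked_insert_loop : Linked (insert s(a, a) B) z w ↔ Linked B z w := by
  rw [linked_insert_iff]
  constructor
  · rintro (h | ⟨h1, h2⟩ | ⟨h1, h2⟩)
    · exact h
    · exact h1.trans h2
    · exact h1.trans h2
  · exact Or.inl

lemma linked_equivalence (B : Finset (Sym2 V)) : Equivalence (Linked B) :=
  ⟨fun _ => .refl, Linked.symm, Linked.trans⟩

lemma quot_mk_eq_iff (B : Finset (Sym2 V)) (x y : V) :
    Quot.mk (Linked B) x = Quot.mk (Linked B) y ↔ Linked B x y := by
  rw [Quot.eq]; exact (linked_equivalence B).eqvGen_iff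

lemma ncomp_le_ncomp (h : ∀ x y, Linked B x y → Linked B' x y) : ncomp B' ≤ ncomp B := by
  haveI := Quot.finite (Linked B)
  refine Nat.card_le_card_of_surjective (Quot.map id h) ?_
  intro q
  obtain ⟨z, rfl⟩ := q.exists_rep
  exact ⟨Quot.mk _ z, rfl⟩

lemma ncomp_insert_le (e : Sym2 V) : ncomp (insert e B) ≤ ncomp B :=
  ncomp_le_ncomp (fun _ _ h => h.mono (Finset.subset_insert _ _))

lemma ncomp_le_insert_add_one : ncomp B ≤ ncomp (insert s(a, c) B) + 1 := by
  haveI := Quot.finite (Linked B)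
  haveI := Quot.finite (Linked (insert s(a, c) B))
  letI : Fintype (Quot (Linked B)) := Fintype.ofFinite _
  letI : Fintype (Quot (Linked (insert s(a, c) B))) := Fintype.ofFinite _
  rw [ncomp, ncomp, Nat.card_eq_fintype_card, Nat.card_eq_fintype_card]
  set q : Quot (Linked B) → Quot (Linked (insert s(a, c) B)) :=
    Quot.map id (fun x y h => h.mono (Finset.subset_insert _ _)) with hqdef
  have hq : ∀ x y : Quot (Linked B), q x = q y →
      x = y ∨ (x = Quot.mk _ a ∧ y = Quot.mk _ c) ∨ (x = Quot.mk _ c ∧ y = Quot.mk _ a) := by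
    intro x y
    induction x using Quot.ind with | _ p => ?_
    induction y using Quot.ind with | _ r => ?_
    intro hpr
    have hpr' : Linked (insert s(a, c) B) p r := (quot_mk_eq_iff _ _ _).mp hpr
    rcases linked_insert_iff.mp hpr' with h | ⟨h1, h2⟩ | ⟨h1, h2⟩
    · exact Or.inl ((quot_mk_eq_iff _ _ _).mpr h)
    · exact Or.inr (Or.inl ⟨(quot_mk_eq_iff _ _ _).mpr h1, (quot_mk_eq_iff _ _ _).mpr h2.symm⟩)
    · exact Or.inr (Or.inr ⟨(quot_mk_eq_iff _ _ _).mpr h1, (quot_mk_eq_iff _ _ _).mpr h2.symm⟩)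
  have hinj : Set.InjOn q ((Finset.univ.erase (Quot.mk (Linked B) c)) : Finset (Quot (Linked B))) := by
    intro x hx y hy hxy
    rcases hq x y hxy with h | ⟨h1, h2⟩ | ⟨h1, h2⟩
    · exact h
    · exact absurd h2 ((Finset.mem_erase.mp hy).1)
    · exact absurd h1 ((Finset.mem_erase.mp hx).1)
  have hcard := Finset.card_le_card_of_injOn q (fun _ _ => Finset.mem_univ _) hinj
  rw [Finset.card_erase_of_mem (Finset.mem_univ _)] at hcard
  rw [Finset.card_univ, Finset.card_univ] at hcard
  omega

lemma ncomp_insert_lt (hac : ¬ Linked B a c) : ncomp (insert s(a, c) B) < ncomp B := by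
  haveI := Quot.finite (Linked B)
  haveI := Quot.finite (Linked (insert s(a, c) B))
  letI : Fintype (Quot (Linked B)) := Fintype.ofFinite _
  letI : Fintype (Quot (Linked (insert s(a, c) B))) := Fintype.ofFinite _
  rw [ncomp, ncomp, Nat.card_eq_fintype_card, Nat.card_eq_fintype_card]
  refine Fintype.card_lt_of_surjective_not_injective
    (Quot.map id (fun x y h => h.mono (Finset.subset_insert _ _)))
    (fun q => by obtain ⟨z, rfl⟩ := q.exists_rep; exact ⟨Quot.mk _ z, rfl⟩) ?_
  intro hinj
  have : (Quot.mk (Linked B) a) = Quot.mk (Linked B) c := by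
    apply hinj
    show Quot.mk _ a = Quot.mk _ c
    exact (quot_mk_eq_iff _ _ _).mpr (linked_of_mem (Finset.mem_insert_self _ _))
  exact hac ((quot_mk_eq_iff _ _ _).mp this)

lemma linked_empty_iff : Linked (∅ : Finset (Sym2 V)) x y ↔ x = y := by
  constructor
  · intro h
    induction h with
    | refl => rfl
    | tail _ he ih => exact absurd he (Finset.notMem_empty _)
  · rintro rfl; exact .refl

lemma ncomp_empty : ncomp (∅ : Finset (Sym2 V)) = Fintype.card V := by
  rw [ncomp, ← Nat.card_eq_fintype_card]
  refine Nat.card_congr (Equiv.ofBijective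
    (Quot.lift id (fun x y h => linked_empty_iff.mp h)) ⟨?_, ?_⟩)
  · intro q1 q2
    induction q1 using Quot.ind with | _ x => ?_
    induction q2 using Quot.ind with | _ y => ?_
    intro h
    exact (quot_mk_eq_iff _ _ _).mpr (linked_empty_iff.mpr h)
  · exact fun x => ⟨Quot.mk _ x, rfl⟩

lemma ncomp_le_insert_add_one' (e : Sym2 V) : ncomp B ≤ ncomp (insert e B) + 1 := by
  induction e using Sym2.ind with | _ x y => exact ncomp_le_insert_add_one

lemma card_le_ncomp_add_card (B : Finset (Sym2 V)) : Fintype.card V ≤ ncomp B + B.card := by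
  induction B using Finset.induction_on with
  | empty => simp [ncomp_empty]
  | @insert e s he ih =>
    have h1 := ncomp_le_insert_add_one' (B := s) e
    rw [Finset.card_insert_of_notMem he]
    omega

lemma ncomp_eq_one_iff [Nonempty V] : ncomp B = 1 ↔ ∀ x y, Linked B x y := by
  rw [ncomp, Nat.card_eq_one_iff_unique]
  constructor
  · rintro ⟨hs, _⟩ x y
    haveI := hs
    exact (quot_mk_eq_iff _ _ _).mp (Subsingleton.elim _ _)
  · intro h
    refine ⟨⟨fun q1 q2 => ?_⟩, ⟨Quot.mk _ (Classical.arbitrary V)⟩⟩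
    induction q1 using Quot.ind with | _ x => ?_
    induction q2 using Quot.ind with | _ y => ?_
    exact (quot_mk_eq_iff _ _ _).mpr (h x y)

lemma ncomp_pos [Nonempty V] (B : Finset (Sym2 V)) : 0 < ncomp B := by
  haveI := Quot.finite (Linked B)
  haveI : Nonempty (Quot (Linked B)) := ⟨Quot.mk _ (Classical.arbitrary V)⟩
  exact Nat.card_pos

lemma linked_or_of_ncomp_two (h2 : ncomp B = 2) (hpq : ¬ Linked B p q) (x : V) :
    Linked B p x ∨ Linked B q x := by
  by_contra hx
  push_neg at hx
  obtain ⟨hpx, hqx⟩ := hx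
  haveI := Quot.finite (Linked B)
  letI : Fintype (Quot (Linked B)) := Fintype.ofFinite _
  have hqx' : ¬ Linked B q x := hqx
  have h3 : ({Quot.mk (Linked B) p, Quot.mk _ q, Quot.mk _ x} : Finset (Quot (Linked B))).card = 3 := by
    rw [Finset.card_insert_of_notMem, Finset.card_insert_of_notMem, Finset.card_singleton]
    · simp only [Finset.mem_singleton]
      rw [quot_mk_eq_iff]
      exact hqx'
    · simp only [Finset.mem_insert, Finset.mem_singleton]
      rw [quot_mk_eq_iff, quot_mk_eq_iff]
      tauto
  have hle : ({Quot.mk (Linked B) p, Quot.mk _ q, Quot.mk _ x} : Finset (Quot (Linked B))).card ≤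
      Fintype.card (Quot (Linked B)) := Finset.card_le_univ _
  rw [h3] at hle
  rw [ncomp, Nat.card_eq_fintype_card] at h2
  omega

lemma exists_unlinked_of_ncomp_two (h2 : ncomp B = 2) (b : V) : ∃ x, ¬ Linked B b x := by
  haveI : Nonempty V := ⟨b⟩
  by_contra h
  push_neg at h
  have : ncomp B = 1 := ncomp_eq_one_iff.mpr (fun x y => (h x).symm.trans (h y))
  omega


lemma ncomp_congr (h : ∀ x y, Linked B x y ↔ Linked B' x y) : ncomp B = ncomp B' :=
  le_antisymm (ncomp_le_ncomp fun x y hxy => (h x y).mpr hxy)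
    (ncomp_le_ncomp fun x y hxy => (h x y).mp hxy)

lemma ncomp_le_card (B : Finset (Sym2 V)) : ncomp B ≤ Fintype.card V := by
  rw [ncomp, ← Nat.card_eq_fintype_card]
  exact Nat.card_le_card_of_surjective (Quot.mk _) (fun q => q.exists_rep)

lemma exists_spanning_tree [Nonempty V] (E0 : Finset (Sym2 V)) (h1 : ncomp E0 = 1) :
    ∃ T, T ⊆ E0 ∧ IsSF 1 T := by
  have key : ∀ j, j + 1 ≤ Fintype.card V →
      ∃ B, B ⊆ E0 ∧ B.card = j ∧ ncomp B = Fintype.card V - j := by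
    intro j
    induction j with
    | zero => intro _; exact ⟨∅, Finset.empty_subset _, Finset.card_empty, by simp [ncomp_empty]⟩
    | succ j ih =>
      intro hj
      obtain ⟨B, hBE, hBcard, hBnc⟩ := ih (by omega)
      have hnc2 : 2 ≤ ncomp B := by omega
      have : ∃ p q, s(p, q) ∈ E0 ∧ ¬ Linked B p q := by
        by_contra hcon
        push_neg at hcon
        have hall : ∀ x y, Linked B x y := by
          intro x y
          exact linked_of_linked_of_edges (fun p q hpq => hcon p q hpq) (ncomp_eq_one_iff.mp h1 x y)
        have : ncomp B = 1 := ncomp_eq_one_iff.mpr hall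
        omega
      obtain ⟨p, q, hpq, hnl⟩ := this
      have hmem : s(p, q) ∉ B := fun h => hnl (linked_of_mem h)
      refine ⟨insert s(p, q) B, Finset.insert_subset hpq hBE, ?_, ?_⟩
      · rw [Finset.card_insert_of_notMem hmem, hBcard]
      · have hlt := ncomp_insert_lt hnl
        have hge := card_le_ncomp_add_card (insert s(p, q) B)
        rw [Finset.card_insert_of_notMem hmem, hBcard] at hge
        omega
  have hn : 1 ≤ Fintype.card V := Fintype.card_pos
  obtain ⟨B, hBE, hBcard, hBnc⟩ := key (Fintype.card V - 1) (by omega)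
  refine ⟨B, hBE, ?_, by omega⟩
  rw [hBnc]; omega

lemma nonempty_of_isSF {k : ℕ} (hk : 0 < k) (hT : IsSF k T) : Nonempty V := by
  by_contra h
  have : Fintype.card V = 0 := by
    rw [Fintype.card_eq_zero_iff]; exact ⟨fun v => h ⟨v⟩⟩
  have h2 := hT.2
  omega

lemma tree_linked (hT : IsSF 1 T) (x y : V) : Linked T x y := by
  haveI : Nonempty V := nonempty_of_isSF one_pos hT
  exact ncomp_eq_one_iff.mp hT.1 x y

lemma tree_no_loop (hT : IsSF 1 T) (z : V) : s(z, z) ∉ T := by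
  intro hz
  haveI : Nonempty V := nonempty_of_isSF one_pos hT
  have heq : insert s(z, z) (T.erase s(z, z)) = T := Finset.insert_erase hz
  have hiff : ∀ x y, Linked (T.erase s(z, z)) x y ↔ Linked T x y := by
    intro x y
    conv_rhs => rw [← heq]
    rw [linked_insert_loop]
  have hnc : ncomp (T.erase s(z, z)) = 1 := by rw [ncomp_congr hiff]; exact hT.1
  have hcard := card_le_ncomp_add_card (T.erase s(z, z))
  rw [hnc, Finset.card_erase_of_mem hz] at hcard
  have hpos : 0 < T.card := Finset.card_pos.mpr ⟨_, hz⟩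
  have h2 := hT.2
  omega

lemma tree_erase_not_linked (hT : IsSF 1 T) (hac : s(a, c) ∈ T) :
    ¬ Linked (T.erase s(a, c)) a c := by
  intro h
  have heq : insert s(a, c) (T.erase s(a, c)) = T := Finset.insert_erase hac
  have hiff : ∀ x y, Linked (T.erase s(a, c)) x y ↔ Linked T x y := by
    intro x y
    constructor
    · intro hl; exact hl.mono (Finset.erase_subset _ _)
    · intro hl
      rw [← heq] at hl
      rcases linked_insert_iff.mp hl with h1 | ⟨h1, h2⟩ | ⟨h1, h2⟩
      · exact h1
      · exact (h1.trans h).trans h2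
      · exact (h1.trans h.symm).trans h2
  have hnc : ncomp (T.erase s(a, c)) = 1 := by rw [ncomp_congr hiff]; exact hT.1
  have hcard := card_le_ncomp_add_card (T.erase s(a, c))
  rw [hnc, Finset.card_erase_of_mem hac] at hcard
  have hpos : 0 < T.card := Finset.card_pos.mpr ⟨_, hac⟩
  have h2 := hT.2
  omega

lemma tree_erase_isSF2 (hT : IsSF 1 T) {e : Sym2 V} (he : e ∈ T) : IsSF 2 (T.erase e) := by
  have hge := card_le_ncomp_add_card (T.erase e)
  rw [Finset.card_erase_of_mem he] at hge
  have hle : ncomp (T.erase e) ≤ ncomp (insert e (T.erase e)) + 1 := ncomp_le_insert_add_one' e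
  rw [Finset.insert_erase he, hT.1] at hle
  have hpos : 0 < T.card := Finset.card_pos.mpr ⟨_, he⟩
  have h2 := hT.2
  constructor
  · omega
  · rw [Finset.card_erase_of_mem he]; omega

lemma tree_erase_dichotomy (hT : IsSF 1 T) (hac : s(a, c) ∈ T) (x : V) :
    Linked (T.erase s(a, c)) a x ∨ Linked (T.erase s(a, c)) c x := by
  have hl : Linked T a x := tree_linked hT a x
  rw [← Finset.insert_erase hac] at hl
  rcases linked_insert_iff.mp hl with h | ⟨h1, h2⟩ | ⟨h1, h2⟩
  · exact Or.inl h
  · exact Or.inr h2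
  · exact Or.inl h2

lemma star_subset_erase (u z : V) (T : Finset (Sym2 V)) :
    T.filter (fun e => u ∉ e) ⊆ T.erase s(u, z) := by
  intro e he
  rw [Finset.mem_filter] at he
  rw [Finset.mem_erase]
  refine ⟨fun hh => he.2 ?_, he.1⟩
  rw [hh]
  exact Sym2.mem_mk_left u z

lemma star_isolated (hx : Linked (T.filter (fun e => u ∉ e)) u x) : x = u := by
  induction hx with
  | refl => rfl
  | @tail m w hum hedge ih =>
    rw [Finset.mem_filter] at hedge
    rw [ih] at hedge
    exact absurd (Sym2.mem_mk_left u w) hedge.2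

lemma star_other_comp (hT : IsSF 1 T) (hf : s(u, w) ∈ T) (x : V) :
    Linked (T.erase s(u, w)) w x ↔ Linked (T.filter (fun e => u ∉ e)) w x := by
  set S := T.filter (fun e => u ∉ e) with hS
  constructor
  · intro h
    refine Linked.closed (B := T.erase s(u, w)) ?_ h (linked_refl S w)
    intro p q hpq
    by_cases hu : u ∈ s(p, q)
    · rw [Sym2.mem_iff] at hu
      have hkey : ∀ y : V, s(u, y) ∈ T.erase s(u, w) → (¬ Linked S w u ∧ ¬ Linked S w y) := by
        intro y hy
        constructor
        · intro hl
          exact absurd (star_isolated hl.symm) (by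
            intro hwu
            rw [hwu] at hf
            exact tree_no_loop hT u hf)
        · intro hl
          have hyT : s(u, y) ∈ T.erase s(u, w) := hy
          have h1 : Linked (T.erase s(u, w)) u y := linked_of_mem hyT
          have h2 : Linked (T.erase s(u, w)) w y := hl.mono (star_subset_erase u w T)
          exact tree_erase_not_linked hT hf (h1.trans h2.symm)
      rcases hu with rfl | rfl
      · obtain ⟨h1, h2⟩ := hkey q hpq
        constructor
        · intro hl; exact absurd hl h1
        · intro hl; exact absurd hl h2
      · obtain ⟨h1, h2⟩ := hkey p (by rw [show s(u,p) = s(p,u) from Sym2.eq_swap]; exact hpq)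
        constructor
        · intro hl; exact absurd hl h2
        · intro hl; exact absurd hl h1
    · have hpqS : s(p, q) ∈ S := by rw [hS, Finset.mem_filter]; exact ⟨Finset.mem_of_mem_erase hpq, hu⟩
      constructor
      · intro hl; exact hl.trans (linked_of_mem hpqS)
      · intro hl; exact hl.trans (linked_of_mem hpqS).symm
  · intro h; exact h.mono (star_subset_erase u w T)

lemma star_u_comp (hT : IsSF 1 T) (hf : s(u, w) ∈ T) (x : V) :
    Linked (T.erase s(u, w)) u x ↔
      (x = u ∨ ∃ z, z ≠ u ∧ s(u, z) ∈ T.erase s(u, w) ∧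
        Linked (T.filter (fun e => u ∉ e)) z x) := by
  set S := T.filter (fun e => u ∉ e) with hS
  constructor
  · intro h
    refine Linked.closed (B := T.erase s(u, w))
      (Z := fun y => y = u ∨ ∃ z, z ≠ u ∧ s(u, z) ∈ T.erase s(u, w) ∧ Linked S z y) ?_ h (Or.inl rfl)
    intro p q hpq
    by_cases hu : u ∈ s(p, q)
    · rw [Sym2.mem_iff] at hu
      have hkey : ∀ y : V, s(u, y) ∈ T.erase s(u, w) → (y ≠ u) → True := fun _ _ _ => trivial
      have hyne : ∀ y : V, s(u, y) ∈ T → y ≠ u := by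
        intro y hy hyu
        rw [hyu] at hy
        exact tree_no_loop hT u hy
      rcases hu with rfl | rfl
      · have hq : q ≠ u := hyne q (Finset.mem_of_mem_erase hpq)
        constructor
        · intro _; exact Or.inr ⟨q, hq, hpq, linked_refl S q⟩
        · intro _; exact Or.inl rfl
      · have hp : p ≠ u := by
          intro hpu
          rw [hpu] at hpq
          exact hyne u (by
            have := Finset.mem_of_mem_erase hpq
            rwa [Sym2.eq_swap] at this) rfl
        constructor
        · intro _; exact Or.inl rfl
        · intro _
          refine Or.inr ⟨p, hp, ?_, linked_refl S p⟩
          rw [show s(u,p) = s(p,u) from Sym2.eq_swap]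
          exact hpq
    · have hpqS : s(p, q) ∈ S := by rw [hS, Finset.mem_filter]; exact ⟨Finset.mem_of_mem_erase hpq, hu⟩
      have hpu : p ≠ u := by rintro rfl; exact hu (Sym2.mem_mk_left _ _)
      have hqu : q ≠ u := by rintro rfl; exact hu (Sym2.mem_mk_right _ _)
      constructor
      · rintro (rfl | ⟨z, hz1, hz2, hz3⟩)
        · exact absurd rfl hpu
        · exact Or.inr ⟨z, hz1, hz2, hz3.trans (linked_of_mem hpqS)⟩
      · rintro (rfl | ⟨z, hz1, hz2, hz3⟩)
        · exact absurd rfl hqu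
        · exact Or.inr ⟨z, hz1, hz2, hz3.trans (linked_of_mem hpqS).symm⟩
  · rintro (rfl | ⟨z, hz1, hz2, hz3⟩)
    · exact linked_refl _ _
    · exact (linked_of_mem hz2).trans (hz3.mono (star_subset_erase u w T))

lemma star_exists (hT : IsSF 1 T) {x0 : V} (hx0 : x0 ≠ u) :
    ∃ z, z ≠ u ∧ s(u, z) ∈ T ∧ Linked (T.filter (fun e => u ∉ e)) z x0 := by
  set S := T.filter (fun e => u ∉ e) with hS
  have h := tree_linked hT u x0
  have hZ : ∀ p q, s(p, q) ∈ T →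
      ((p = u ∨ ∃ z, z ≠ u ∧ s(u, z) ∈ T ∧ Linked S z p) ↔
       (q = u ∨ ∃ z, z ≠ u ∧ s(u, z) ∈ T ∧ Linked S z q)) := by
    intro p q hpq
    have hyne : ∀ y : V, s(u, y) ∈ T → y ≠ u := by
      intro y hy hyu
      rw [hyu] at hy
      exact tree_no_loop hT u hy
    by_cases hu : u ∈ s(p, q)
    · rw [Sym2.mem_iff] at hu
      rcases hu with rfl | rfl
      · have hq : q ≠ u := hyne q hpq
        constructor
        · intro _; exact Or.inr ⟨q, hq, hpq, linked_refl S q⟩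
        · intro _; exact Or.inl rfl
      · have hp : p ≠ u := by
          intro hpu
          rw [hpu] at hpq
          rw [Sym2.eq_swap] at hpq
          exact hyne u hpq rfl
        constructor
        · intro _; exact Or.inl rfl
        · intro _
          refine Or.inr ⟨p, hp, ?_, linked_refl S p⟩
          rw [show s(u,p) = s(p,u) from Sym2.eq_swap]
          exact hpq
    · have hpqS : s(p, q) ∈ S := by rw [hS, Finset.mem_filter]; exact ⟨hpq, hu⟩
      have hpu : p ≠ u := by rintro rfl; exact hu (Sym2.mem_mk_left _ _)
      have hqu : q ≠ u := by rintro rfl; exact hu (Sym2.mem_mk_right _ _)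
      constructor
      · rintro (rfl | ⟨z, hz1, hz2, hz3⟩)
        · exact absurd rfl hpu
        · exact Or.inr ⟨z, hz1, hz2, hz3.trans (linked_of_mem hpqS)⟩
      · rintro (rfl | ⟨z, hz1, hz2, hz3⟩)
        · exact absurd rfl hqu
        · exact Or.inr ⟨z, hz1, hz2, hz3.trans (linked_of_mem hpqS).symm⟩
  have := Linked.closed (Z := fun y => y = u ∨ ∃ z, z ≠ u ∧ s(u, z) ∈ T ∧ Linked S z y) hZ h (Or.inl rfl)
  rcases this with h1 | h2
  · exact absurd h1 hx0
  · exact h2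

lemma star_sep_iff (hT : IsSF 1 T) (hf : s(u, z) ∈ T) (b : V) :
    (¬ Linked (T.erase s(u, z)) u b) ↔ Linked (T.filter (fun e => u ∉ e)) z b := by
  constructor
  · intro h
    rcases tree_erase_dichotomy hT hf b with h1 | h1
    · exact absurd h1 h
    · exact (star_other_comp hT hf b).mp h1
  · intro h hub
    have h1 : Linked (T.erase s(u, z)) z b := h.mono (star_subset_erase u z T)
    exact tree_erase_not_linked hT hf (hub.trans h1.symm)

lemma star_unique (hT : IsSF 1 T) {z1 z2 : V} (hf1 : s(u, z1) ∈ T) (hf2 : s(u, z2) ∈ T)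
    (hl : Linked (T.filter (fun e => u ∉ e)) z1 z2) : z1 = z2 := by
  by_contra hne
  have hz1u : z1 ≠ u := by
    intro h; rw [h] at hf1; exact tree_no_loop hT u hf1
  have hz2u : z2 ≠ u := by
    intro h; rw [h] at hf2; exact tree_no_loop hT u hf2
  have hedge : s(u, z2) ≠ s(u, z1) := by
    intro h
    rcases Sym2.eq_iff.mp h with ⟨-, h2⟩ | ⟨h1, h2⟩
    · exact hne h2.symm
    · exact hz2u h2
  have hmem : s(u, z2) ∈ T.erase s(u, z1) := Finset.mem_erase.mpr ⟨hedge, hf2⟩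
  have : Linked (T.erase s(u, z1)) u z1 :=
    (linked_of_mem hmem).trans ((hl.symm.mono (star_subset_erase u z1 T)))
  exact tree_erase_not_linked hT hf1 this

lemma floating_mem_iff {b x : V} : x ∈ floating b B ↔ ¬ Linked B b x := by
  rw [floating, Finset.mem_filter]
  simp

lemma floating_linked (h2 : ncomp B = 2) {b x y : V} (hx : ¬ Linked B b x)
    (hy : ¬ Linked B b y) : Linked B x y := by
  rcases linked_or_of_ncomp_two h2 hx y with h | h
  · exact absurd h hy
  · exact h

lemma isSF2_insert_crossing {b : V} (hB : IsSF 2 B) (hu : ¬ Linked B b u) (hw : Linked B b w) :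
    IsSF 1 (insert s(u, w) B) ∧ s(u, w) ∉ B := by
  have huw : ¬ Linked B u w := fun h => hu (hw.trans h.symm)
  have hnm : s(u, w) ∉ B := fun h => huw (linked_of_mem h)
  have hlt := ncomp_insert_lt huw
  have hge := card_le_ncomp_add_card (insert s(u, w) B)
  rw [Finset.card_insert_of_notMem hnm] at hge
  have h1 := hB.1
  have h2 := hB.2
  have hpos : 0 < ncomp (insert s(u, w) B) := by
    haveI : Nonempty V := ⟨u⟩
    exact ncomp_pos _
  exact ⟨⟨by omega, by rw [Finset.card_insert_of_notMem hnm]; omega⟩, hnm⟩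

/-- The attachment point of `u` toward `t` in a tree. -/
def pickZ (T : Finset (Sym2 V)) (u t : V) : V :=
  if h : ∃ z, z ≠ u ∧ s(u, z) ∈ T ∧ Linked (T.filter (fun e => u ∉ e)) z t then h.choose else t

lemma pickZ_spec (hT : IsSF 1 T) {u t : V} (ht : t ≠ u) :
    pickZ T u t ≠ u ∧ s(u, pickZ T u t) ∈ T ∧
      Linked (T.filter (fun e => u ∉ e)) (pickZ T u t) t := by
  have h := star_exists hT (u := u) ht
  rw [pickZ, dif_pos h]
  exact h.choose_spec

lemma pickZ_eq (hT : IsSF 1 T) {u t z : V} (hz : z ≠ u) (hm : s(u, z) ∈ T)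
    (hl : Linked (T.filter (fun e => u ∉ e)) z t) : pickZ T u t = z := by
  have hex : ∃ z', z' ≠ u ∧ s(u, z') ∈ T ∧ Linked (T.filter (fun e => u ∉ e)) z' t :=
    ⟨z, hz, hm, hl⟩
  rw [pickZ, dif_pos hex]
  obtain ⟨h1, h2, h3⟩ := hex.choose_spec
  exact star_unique hT h2 hm (h3.trans hl.symm)

lemma sep_package (hT : IsSF 1 T) {u b : V} (hub : u ≠ b) :
    pickZ T u b ≠ u ∧ s(u, pickZ T u b) ∈ T ∧
    ¬ Linked (T.erase s(u, pickZ T u b)) u b ∧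
    Linked (T.erase s(u, pickZ T u b)) (pickZ T u b) b ∧
    IsSF 2 (T.erase s(u, pickZ T u b)) := by
  obtain ⟨h1, h2, h3⟩ := pickZ_spec hT (Ne.symm hub)
  exact ⟨h1, h2, (star_sep_iff hT h2 b).mpr h3,
    h3.mono (star_subset_erase u (pickZ T u b) T), tree_erase_isSF2 hT h2⟩

lemma sep_eq (hT : IsSF 1 T) {u b z' : V} (hz : z' ≠ u) (hm : s(u, z') ∈ T)
    (hsep : ¬ Linked (T.erase s(u, z')) u b) : pickZ T u b = z' :=
  pickZ_eq hT hz hm ((star_sep_iff hT hm b).mp hsep)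

/-- Sum of weights of 2SFs in which both `w` and `v` are floating. -/
def FF (c : Sym2 V → ℝ) (b w v : V) : ℝ :=
  ∑ B ∈ Finset.univ.filter (fun B : Finset (Sym2 V) =>
      IsSF 2 B ∧ w ∈ floating b B ∧ v ∈ floating b B), wt c B

lemma FF_left_b (c : Sym2 V → ℝ) (b v : V) : FF c b b v = 0 := by
  rw [FF]
  apply Finset.sum_eq_zero
  intro B hB
  rw [Finset.mem_filter] at hB
  exact absurd (linked_refl B b) (floating_mem_iff.mp hB.2.2.1)

lemma FF_right_b (c : Sym2 V → ℝ) (b u : V) : FF c b u b = 0 := by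
  rw [FF]
  apply Finset.sum_eq_zero
  intro B hB
  rw [Finset.mem_filter] at hB
  exact absurd (linked_refl B b) (floating_mem_iff.mp hB.2.2.2)

lemma key_identity (c : Sym2 V → ℝ) (b u v : V) (hub : u ≠ b) (hvb : v ≠ b) :
    ∑ w : V, lap c u w * FF c b w v = if u = v then kappa1 c else 0 := by
  classical
  -- Step 1: rewrite via off-diagonal differences
  have step1 : ∑ w : V, lap c u w * FF c b w v =
      ∑ w ∈ Finset.univ.filter (· ≠ u),
        (c s(u, w) * FF c b u v - c s(u, w) * FF c b w v) := by
    rw [Fintype.sum_eq_add_sum_compl u (fun w => lap c u w * FF c b w v)]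
    have hcompl : ({u}ᶜ : Finset V) = Finset.univ.filter (· ≠ u) := by
      ext x; simp
    rw [hcompl]
    have hdiag : lap c u u = ∑ w ∈ Finset.univ.filter (· ≠ u), c s(u, w) := by
      simp only [lap]
      simp
    have hoff : ∀ w ∈ Finset.univ.filter (· ≠ u),
        lap c u w * FF c b w v = -(c s(u, w) * FF c b w v) := by
      intro w hw
      rw [Finset.mem_filter] at hw
      have hlap : lap c u w = -c s(u, w) := by
        simp only [lap]
        rw [if_neg (fun h => hw.2 h.symm)]
      rw [hlap]; ring
    rw [Finset.sum_congr rfl hoff, hdiag, Finset.sum_mul, Finset.sum_neg_distrib,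
      Finset.sum_sub_distrib]
    rw [sub_eq_add_neg]
  rw [step1]
  -- Step 2: pointwise telescoping of FF differences
  have hsplit : ∀ x y : V, FF c b x v =
      (∑ B ∈ Finset.univ.filter (fun B : Finset (Sym2 V) =>
        IsSF 2 B ∧ x ∈ floating b B ∧ v ∈ floating b B ∧ y ∉ floating b B), wt c B) +
      (∑ B ∈ Finset.univ.filter (fun B : Finset (Sym2 V) =>
        IsSF 2 B ∧ x ∈ floating b B ∧ v ∈ floating b B ∧ y ∈ floating b B), wt c B) := by
    intro x y
    rw [FF, ← Finset.sum_filter_add_sum_filter_not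
      (Finset.univ.filter (fun B : Finset (Sym2 V) =>
        IsSF 2 B ∧ x ∈ floating b B ∧ v ∈ floating b B)) (fun B => y ∉ floating b B)]
    congr 1
    · apply Finset.sum_congr ?_ (fun x _ => rfl)
      rw [Finset.filter_filter]
      apply Finset.filter_congr
      intro B _
      constructor
      · rintro ⟨⟨a1, a2, a3⟩, a4⟩; exact ⟨a1, a2, a3, a4⟩
      · rintro ⟨a1, a2, a3, a4⟩; exact ⟨⟨a1, a2, a3⟩, a4⟩
    · apply Finset.sum_congr ?_ (fun x _ => rfl)
      rw [Finset.filter_filter]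
      apply Finset.filter_congr
      intro B _
      constructor
      · rintro ⟨⟨a1, a2, a3⟩, a4⟩; exact ⟨a1, a2, a3, not_not.mp a4⟩
      · rintro ⟨a1, a2, a3, a4⟩; exact ⟨⟨a1, a2, a3⟩, not_not.mpr a4⟩
  have hDuw : ∀ w : V,
      Finset.univ.filter (fun B : Finset (Sym2 V) =>
        IsSF 2 B ∧ u ∈ floating b B ∧ v ∈ floating b B ∧ w ∈ floating b B) =
      Finset.univ.filter (fun B : Finset (Sym2 V) =>
        IsSF 2 B ∧ w ∈ floating b B ∧ v ∈ floating b B ∧ u ∈ floating b B) := by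
    intro w
    apply Finset.filter_congr
    intro B _
    constructor
    · rintro ⟨a1, a2, a3, a4⟩; exact ⟨a1, a4, a3, a2⟩
    · rintro ⟨a1, a2, a3, a4⟩; exact ⟨a1, a4, a3, a2⟩
  have step2 : ∀ w : V, FF c b u v - FF c b w v =
      (∑ B ∈ Finset.univ.filter (fun B : Finset (Sym2 V) =>
        IsSF 2 B ∧ u ∈ floating b B ∧ v ∈ floating b B ∧ w ∉ floating b B), wt c B) -
      (∑ B ∈ Finset.univ.filter (fun B : Finset (Sym2 V) =>
        IsSF 2 B ∧ w ∈ floating b B ∧ v ∈ floating b B ∧ u ∉ floating b B), wt c B) := by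
    intro w
    rw [hsplit u w, hsplit w u, hDuw w]
    ring
  have step3 : ∑ w ∈ Finset.univ.filter (· ≠ u),
      (c s(u, w) * FF c b u v - c s(u, w) * FF c b w v) =
      (∑ x ∈ (Finset.univ.filter (· ≠ u)).sigma (fun w =>
        Finset.univ.filter (fun B : Finset (Sym2 V) =>
          IsSF 2 B ∧ u ∈ floating b B ∧ v ∈ floating b B ∧ w ∉ floating b B)),
        c s(u, x.1) * wt c x.2) -
      (∑ x ∈ (Finset.univ.filter (· ≠ u)).sigma (fun w =>
        Finset.univ.filter (fun B : Finset (Sym2 V) =>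
          IsSF 2 B ∧ w ∈ floating b B ∧ v ∈ floating b B ∧ u ∉ floating b B)),
        c s(u, x.1) * wt c x.2) := by
    rw [Finset.sum_sigma, Finset.sum_sigma, ← Finset.sum_sub_distrib]
    apply Finset.sum_congr rfl
    intro w _
    rw [← mul_sub, step2 w, mul_sub, Finset.mul_sum, Finset.mul_sum]
  rw [step3]
  by_cases huv : u = v
  · -- second sigma sum is zero
    subst huv
    rw [if_pos rfl]
    have hzero : (∑ x ∈ (Finset.univ.filter (· ≠ u)).sigma (fun w =>
        Finset.univ.filter (fun B : Finset (Sym2 V) =>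
          IsSF 2 B ∧ w ∈ floating b B ∧ u ∈ floating b B ∧ u ∉ floating b B)),
        c s(u, x.1) * wt c x.2) = 0 := by
      apply Finset.sum_eq_zero
      intro x hx
      simp only [Finset.mem_sigma, Finset.mem_filter, Finset.mem_univ, true_and] at hx
      exact absurd hx.2.2.2.1 hx.2.2.2.2
    rw [hzero, sub_zero]
    -- bijection with spanning trees
    refine Finset.sum_nbij' (fun x => insert s(u, x.1) x.2)
      (fun T => ⟨pickZ T u b, T.erase s(u, pickZ T u b)⟩) ?_ ?_ ?_ ?_ ?_
    · intro x hx
      simp only [Finset.mem_sigma, Finset.mem_filter, Finset.mem_univ, true_and] at hx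
      rw [Finset.mem_filter]
      refine ⟨Finset.mem_univ _, ?_⟩
      exact (isSF2_insert_crossing hx.2.1 (floating_mem_iff.mp hx.2.2.1)
        (not_not.mp (fun h => hx.2.2.2.2 (floating_mem_iff.mpr h)))).1
    · intro T hT
      rw [Finset.mem_filter] at hT
      obtain ⟨hz1, hz2, hz3, hz4, hz5⟩ := sep_package hT.2 hub
      simp only [Finset.mem_sigma, Finset.mem_filter, Finset.mem_univ, true_and]
      exact ⟨hz1, hz5, floating_mem_iff.mpr (fun h => hz3 h.symm),
        floating_mem_iff.mpr (fun h => hz3 h.symm),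
        fun h => (floating_mem_iff.mp h) hz4.symm⟩
    · intro x hx
      simp only [Finset.mem_sigma, Finset.mem_filter, Finset.mem_univ, true_and] at hx
      obtain ⟨w, B⟩ := x
      simp only at hx ⊢
      have hw : w ≠ u := hx.1
      have hB : IsSF 2 B := hx.2.1
      have hufl := hx.2.2.1
      have hwfl := hx.2.2.2.2
      have hbu : ¬ Linked B b u := floating_mem_iff.mp hufl
      have hbw : Linked B b w := not_not.mp (fun h => hwfl (floating_mem_iff.mpr h))
      obtain ⟨htree, hnm⟩ := isSF2_insert_crossing hB hbu hbw
      have hpick : pickZ (insert s(u, w) B) u b = w := by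
        apply sep_eq htree hw (Finset.mem_insert_self _ _)
        rw [Finset.erase_insert hnm]
        exact fun h => hbu h.symm
      rw [hpick, Finset.erase_insert hnm]
    · intro T hT
      rw [Finset.mem_filter] at hT
      obtain ⟨hz1, hz2, hz3, hz4, hz5⟩ := sep_package hT.2 hub
      exact Finset.insert_erase hz2
    · intro x hx
      simp only [Finset.mem_sigma, Finset.mem_filter, Finset.mem_univ, true_and] at hx
      obtain ⟨w, B⟩ := x
      simp only at hx ⊢
      have hB : IsSF 2 B := hx.2.1
      have hufl := hx.2.2.1
      have hwfl := hx.2.2.2.2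
      have hbu : ¬ Linked B b u := floating_mem_iff.mp hufl
      have hbw : Linked B b w := not_not.mp (fun h => hwfl (floating_mem_iff.mpr h))
      obtain ⟨-, hnm⟩ := isSF2_insert_crossing hB hbu hbw
      rw [wt, wt, Finset.prod_insert hnm]
  · -- u ≠ v : the two sigma sums coincide via a bijection through trees
    rw [if_neg huv, sub_eq_zero]
    -- analysis of a type-I pair
    have main1 : ∀ w : V, ∀ B : Finset (Sym2 V), w ≠ u → IsSF 2 B →
        u ∈ floating b B → v ∈ floating b B → w ∉ floating b B →
        IsSF 1 (insert s(u, w) B) ∧ s(u, w) ∉ B ∧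
          pickZ (insert s(u, w) B) u b = w := by
      intro w B hw hB hufl hvfl hwfl
      have hbu : ¬ Linked B b u := floating_mem_iff.mp hufl
      have hbw : Linked B b w := not_not.mp (fun h => hwfl (floating_mem_iff.mpr h))
      obtain ⟨htree, hnm⟩ := isSF2_insert_crossing hB hbu hbw
      refine ⟨htree, hnm, ?_⟩
      apply sep_eq htree hw (Finset.mem_insert_self _ _)
      rw [Finset.erase_insert hnm]
      exact fun h => hbu h.symm
    -- from a type-I pair to a type-II pair
    have fwd : ∀ w : V, ∀ B : Finset (Sym2 V), w ≠ u → IsSF 2 B →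
        u ∈ floating b B → v ∈ floating b B → w ∉ floating b B →
        (pickZ (insert s(u, w) B) u v ≠ u ∧
         IsSF 2 ((insert s(u, w) B).erase s(u, pickZ (insert s(u, w) B) u v)) ∧
         pickZ (insert s(u, w) B) u v ∈ floating b
            ((insert s(u, w) B).erase s(u, pickZ (insert s(u, w) B) u v)) ∧
         v ∈ floating b ((insert s(u, w) B).erase s(u, pickZ (insert s(u, w) B) u v)) ∧
         u ∉ floating b ((insert s(u, w) B).erase s(u, pickZ (insert s(u, w) B) u v))) := by
      intro w B hw hB hufl hvfl hwfl
      have hbu : ¬ Linked B b u := floating_mem_iff.mp hufl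
      have hbv : ¬ Linked B b v := floating_mem_iff.mp hvfl
      have hbw : Linked B b w := not_not.mp (fun h => hwfl (floating_mem_iff.mpr h))
      obtain ⟨htree, hnm, hpickb⟩ := main1 w B hw hB hufl hvfl hwfl
      set T := insert s(u, w) B with hT
      set g := pickZ T u v with hg
      obtain ⟨hg1, hg2, hg3⟩ := pickZ_spec htree (fun h => huv h.symm)
      rw [← hg] at hg1 hg2 hg3
      -- g ≠ w
      have hgw : g ≠ w := by
        intro h
        have hSB : Linked B w v := by
          have := hg3.mono (star_subset_erase u w T)
          rw [hT, Finset.erase_insert hnm] at this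
          rw [h] at this
          exact this
        exact hbv (hbw.trans hSB)
      have hgsep : ¬ ¬ Linked (T.erase s(u, g)) u b := by
        intro hsep
        exact hgw (hpickb ▸ (sep_eq htree hg1 hg2 hsep).symm ▸ rfl)
      have hub' : Linked (T.erase s(u, g)) u b := not_not.mp hgsep
      have hnog : ¬ Linked (T.erase s(u, g)) u g := tree_erase_not_linked htree hg2
      have hbg : ¬ Linked (T.erase s(u, g)) b g := fun h => hnog (hub'.trans h)
      have hbv' : ¬ Linked (T.erase s(u, g)) b v := by
        intro h
        have hgv : Linked (T.erase s(u, g)) g v := hg3.mono (star_subset_erase u g T)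
        exact hbg (h.trans hgv.symm)
      exact ⟨hg1, tree_erase_isSF2 htree hg2, floating_mem_iff.mpr hbg,
        floating_mem_iff.mpr hbv',
        fun h => (floating_mem_iff.mp h) hub'.symm⟩
    -- analysis of a type-II pair
    have main2 : ∀ g : V, ∀ B : Finset (Sym2 V), g ≠ u → IsSF 2 B →
        g ∈ floating b B → v ∈ floating b B → u ∉ floating b B →
        IsSF 1 (insert s(u, g) B) ∧ s(u, g) ∉ B ∧
          pickZ (insert s(u, g) B) u v = g := by
      intro g B hgu hB hgfl hvfl hufl
      have hbg : ¬ Linked B b g := floating_mem_iff.mp hgfl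
      have hbv : ¬ Linked B b v := floating_mem_iff.mp hvfl
      have hbu : Linked B b u := not_not.mp (fun h => hufl (floating_mem_iff.mpr h))
      have hcross := isSF2_insert_crossing hB hbg hbu
      have hswap : s(g, u) = s(u, g) := Sym2.eq_swap
      rw [hswap] at hcross
      obtain ⟨htree, hnm⟩ := hcross
      refine ⟨htree, hnm, ?_⟩
      apply pickZ_eq htree hgu (Finset.mem_insert_self _ _)
      -- Linked S g v where S = (insert s(u,g) B).filter (u ∉ ·)
      have hBgv : Linked B g v := floating_linked hB.1 hbg hbv
      have hBerase : (insert s(u, g) B).erase s(u, g) = B := Finset.erase_insert hnm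
      have h1 : Linked ((insert s(u, g) B).erase s(u, g)) g v := by rw [hBerase]; exact hBgv
      exact (star_other_comp htree (Finset.mem_insert_self _ _) v).mp h1
    -- from a type-II pair to a type-I pair
    have bwd : ∀ g : V, ∀ B : Finset (Sym2 V), g ≠ u → IsSF 2 B →
        g ∈ floating b B → v ∈ floating b B → u ∉ floating b B →
        (pickZ (insert s(u, g) B) u b ≠ u ∧
         IsSF 2 ((insert s(u, g) B).erase s(u, pickZ (insert s(u, g) B) u b)) ∧
         u ∈ floating b ((insert s(u, g) B).erase s(u, pickZ (insert s(u, g) B) u b)) ∧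
         v ∈ floating b ((insert s(u, g) B).erase s(u, pickZ (insert s(u, g) B) u b)) ∧
         pickZ (insert s(u, g) B) u b ∉ floating b
            ((insert s(u, g) B).erase s(u, pickZ (insert s(u, g) B) u b))) := by
      intro g B hgu hB hgfl hvfl hufl
      have hbg : ¬ Linked B b g := floating_mem_iff.mp hgfl
      have hbv : ¬ Linked B b v := floating_mem_iff.mp hvfl
      have hbu : Linked B b u := not_not.mp (fun h => hufl (floating_mem_iff.mpr h))
      obtain ⟨htree, hnm, hpickv⟩ := main2 g B hgu hB hgfl hvfl hufl
      set T := insert s(u, g) B with hT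
      obtain ⟨hz1, hz2, hz3, hz4, hz5⟩ := sep_package htree hub
      set w := pickZ T u b with hw
      -- g ≠ w
      have hgw : g ≠ w := by
        intro h
        apply hz3
        have : T.erase s(u, w) = B := by rw [← h]; exact Finset.erase_insert hnm
        rw [this]
        exact hbu.symm
      have hedge_ne : s(u, g) ≠ s(u, w) := by
        intro h
        rcases Sym2.eq_iff.mp h with ⟨-, h2⟩ | ⟨h1, h2⟩
        · exact hgw h2
        · exact hgu h2
      have hmemB1 : s(u, g) ∈ T.erase s(u, w) :=
        Finset.mem_erase.mpr ⟨hedge_ne, Finset.mem_insert_self _ _⟩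
      -- Linked S g v
      have hBgv : Linked B g v := floating_linked hB.1 hbg hbv
      have hBerase : T.erase s(u, g) = B := Finset.erase_insert hnm
      have hSgv : Linked (T.filter (fun e => u ∉ e)) g v := by
        apply (star_other_comp htree (Finset.mem_insert_self _ _) v).mp
        rw [hBerase]; exact hBgv
      have hbv1 : ¬ Linked (T.erase s(u, w)) b v := by
        intro h
        have h2 : Linked (T.erase s(u, w)) g v := hSgv.mono (star_subset_erase u w T)
        have h3 : Linked (T.erase s(u, w)) b g := h.trans h2.symm
        have h4 : Linked (T.erase s(u, w)) u g := linked_of_mem hmemB1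
        exact hz3 (h4.trans h3.symm)
      exact ⟨hz1, hz5, floating_mem_iff.mpr (fun h => hz3 h.symm), floating_mem_iff.mpr hbv1,
        fun h => (floating_mem_iff.mp h) hz4.symm⟩
    refine Finset.sum_nbij'
      (fun x => ⟨pickZ (insert s(u, x.1) x.2) u v,
        (insert s(u, x.1) x.2).erase s(u, pickZ (insert s(u, x.1) x.2) u v)⟩)
      (fun y => ⟨pickZ (insert s(u, y.1) y.2) u b,
        (insert s(u, y.1) y.2).erase s(u, pickZ (insert s(u, y.1) y.2) u b)⟩)
      ?_ ?_ ?_ ?_ ?_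
    · intro x hx
      simp only [Finset.mem_sigma, Finset.mem_filter, Finset.mem_univ, true_and] at hx ⊢
      obtain ⟨w, B⟩ := x
      obtain ⟨h1, h2, h3, h4, h5⟩ := fwd w B hx.1 hx.2.1 hx.2.2.1 hx.2.2.2.1 hx.2.2.2.2
      exact ⟨h1, h2, h3, h4, h5⟩
    · intro y hy
      simp only [Finset.mem_sigma, Finset.mem_filter, Finset.mem_univ, true_and] at hy ⊢
      obtain ⟨g, B⟩ := y
      obtain ⟨h1, h2, h3, h4, h5⟩ := bwd g B hy.1 hy.2.1 hy.2.2.1 hy.2.2.2.1 hy.2.2.2.2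
      exact ⟨h1, h2, h3, h4, h5⟩
    · intro x hx
      simp only [Finset.mem_sigma, Finset.mem_filter, Finset.mem_univ, true_and] at hx
      obtain ⟨w, B⟩ := x
      simp only at hx ⊢
      obtain ⟨htree, hnm, hpickb⟩ := main1 w B hx.1 hx.2.1 hx.2.2.1 hx.2.2.2.1 hx.2.2.2.2
      set T := insert s(u, w) B with hT
      set g := pickZ T u v with hg
      obtain ⟨hg1, hg2, hg3⟩ := pickZ_spec htree (t := v) (fun h => huv h.symm)
      rw [← hg] at hg1 hg2 hg3
      have hTT : insert s(u, g) (T.erase s(u, g)) = T := Finset.insert_erase hg2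
      rw [hTT, hpickb]
      rw [hT, Finset.erase_insert hnm]
    · intro y hy
      simp only [Finset.mem_sigma, Finset.mem_filter, Finset.mem_univ, true_and] at hy
      obtain ⟨g, B⟩ := y
      simp only at hy ⊢
      obtain ⟨htree, hnm, hpickv⟩ := main2 g B hy.1 hy.2.1 hy.2.2.1 hy.2.2.2.1 hy.2.2.2.2
      set T := insert s(u, g) B with hT
      obtain ⟨hz1, hz2, hz3, hz4, hz5⟩ := sep_package htree hub
      set w := pickZ T u b with hw
      have hTT : insert s(u, w) (T.erase s(u, w)) = T := Finset.insert_erase hz2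
      rw [hTT, hpickv]
      rw [hT, Finset.erase_insert hnm]
    · intro x hx
      simp only [Finset.mem_sigma, Finset.mem_filter, Finset.mem_univ, true_and] at hx
      obtain ⟨w, B⟩ := x
      simp only at hx ⊢
      obtain ⟨htree, hnm, hpickb⟩ := main1 w B hx.1 hx.2.1 hx.2.2.1 hx.2.2.2.1 hx.2.2.2.2
      set T := insert s(u, w) B with hT
      set g := pickZ T u v with hg
      obtain ⟨hg1, hg2, hg3⟩ := pickZ_spec htree (t := v) (fun h => huv h.symm)
      rw [← hg] at hg1 hg2 hg3
      -- both weights equal wt T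
      have h1 : c s(u, w) * wt c B = wt c T := by
        rw [wt, wt, hT, Finset.prod_insert hnm]
      have h2 : c s(u, g) * wt c (T.erase s(u, g)) = wt c T := by
        rw [wt, wt, Finset.mul_prod_erase _ _ hg2]
      rw [h1, ← h2]
  

lemma wt_nonneg {c : Sym2 V → ℝ} (hc : ∀ e, 0 ≤ c e) (B : Finset (Sym2 V)) : 0 ≤ wt c B :=
  Finset.prod_nonneg fun e _ => hc e

lemma dlap_mul_FF (c : Sym2 V → ℝ) (b : V) :
    dlap c b * (Matrix.of fun p q : {w : V // w ≠ b} => FF c b p.1 q.1) = kappa1 c • 1 := by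
  ext p q
  rw [Matrix.mul_apply, Matrix.smul_apply, Matrix.one_apply]
  have hsub : ∑ r : {w : V // w ≠ b}, dlap c b p r * Matrix.of
        (fun p q : {w : V // w ≠ b} => FF c b p.1 q.1) r q
      = ∑ w ∈ Finset.univ.filter (· ≠ b), lap c p.1 w * FF c b w q.1 := by
    rw [← Finset.sum_subtype_eq_sum_filter (fun w => lap c p.1 w * FF c b w q.1)
      (p := fun w => w ≠ b), ← Finset.subtype_univ]
    exact Finset.sum_congr rfl (fun r _ => rfl)
  rw [hsub]
  have hfull : ∑ w : V, lap c p.1 w * FF c b w q.1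
      = (∑ w ∈ Finset.univ.filter (· ≠ b), lap c p.1 w * FF c b w q.1)
        + lap c p.1 b * FF c b b q.1 := by
    rw [← Finset.sum_filter_add_sum_filter_not Finset.univ (· ≠ b)
      (fun w => lap c p.1 w * FF c b w q.1)]
    congr 1
    have hsingle : Finset.univ.filter (fun w : V => ¬ w ≠ b) = {b} := by
      ext x; simp
    rw [hsingle, Finset.sum_singleton]
  have hfil : ∑ w ∈ Finset.univ.filter (· ≠ b), lap c p.1 w * FF c b w q.1
      = if p.1 = q.1 then kappa1 c else 0 := by
    rw [← key_identity c b p.1 q.1 p.2 q.2, hfull, FF_left_b, mul_zero, add_zero]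
  rw [hfil]
  by_cases hpq : p = q
  · rw [if_pos hpq, if_pos (by rw [hpq]), smul_eq_mul, mul_one]
  · rw [if_neg hpq, if_neg (fun h => hpq (Subtype.ext h)), smul_eq_mul, mul_zero]

lemma green_eq (c : Sym2 V → ℝ) (b : V) (hκ : kappa1 c ≠ 0) (u v : V) :
    green c b u v = (kappa1 c)⁻¹ * FF c b u v := by
  by_cases hu : u = b
  · subst hu; rw [green, dif_pos rfl, FF_left_b, mul_zero]
  by_cases hv : v = b
  · subst hv
    rw [green, dif_neg hu, dif_pos rfl, FF_right_b, mul_zero]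
  rw [green, dif_neg hu, dif_neg hv]
  have hinv : (dlap c b)⁻¹
      = (kappa1 c)⁻¹ • (Matrix.of fun p q : {w : V // w ≠ b} => FF c b p.1 q.1) := by
    apply Matrix.inv_eq_right_inv
    rw [Matrix.mul_smul, dlap_mul_FF, smul_smul, inv_mul_cancel₀ hκ, one_smul]
  rw [hinv, Matrix.smul_apply, Matrix.of_apply, smul_eq_mul]

lemma kappa1_pos {c : Sym2 V → ℝ} (hc : ∀ e, 0 ≤ c e)
    (hconn : ncomp (Finset.univ.filter fun e : Sym2 V => c e ≠ 0) = 1) [Nonempty V] :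
    0 < kappa1 c := by
  obtain ⟨T, hTsub, hT⟩ := exists_spanning_tree _ hconn
  have hwt : 0 < wt c T := by
    apply Finset.prod_pos
    intro e he
    exact lt_of_le_of_ne (hc e) (Ne.symm ((Finset.mem_filter.mp (hTsub he)).2))
  exact lt_of_lt_of_le hwt (Finset.single_le_sum (fun B _ => wt_nonneg hc B)
    (Finset.mem_filter.mpr ⟨Finset.mem_univ _, hT⟩))

lemma kappa2_pos {c : Sym2 V → ℝ} (hc : ∀ e, 0 ≤ c e)
    (hconn : ncomp (Finset.univ.filter fun e : Sym2 V => c e ≠ 0) = 1)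
    (hcard : 2 ≤ Fintype.card V) : 0 < kappa2 c := by
  haveI : Nonempty V := Fintype.card_pos_iff.mp (by omega)
  obtain ⟨T, hTsub, hT⟩ := exists_spanning_tree _ hconn
  have hTne : T.Nonempty := by
    rw [← Finset.card_pos]
    have := hT.2
    omega
  obtain ⟨e, he⟩ := hTne
  have hB : IsSF 2 (T.erase e) := tree_erase_isSF2 hT he
  have hwt : 0 < wt c (T.erase e) := by
    apply Finset.prod_pos
    intro f hf
    have hfT : f ∈ T := Finset.mem_of_mem_erase hf
    exact lt_of_le_of_ne (hc f) (Ne.symm ((Finset.mem_filter.mp (hTsub hfT)).2))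
  exact lt_of_lt_of_le hwt (Finset.single_le_sum (fun B _ => wt_nonneg hc B)
    (Finset.mem_filter.mpr ⟨Finset.mem_univ _, hB⟩))

lemma sum_FF (c : Sym2 V → ℝ) (b : V) :
    ∑ u : V, ∑ v : V, FF c b u v =
      ∑ B ∈ Finset.univ.filter (IsSF 2), wt c B * ((floating b B).card : ℝ) ^ 2 := by
  have h1 : ∀ u v : V, FF c b u v = ∑ B ∈ Finset.univ.filter (IsSF 2),
      (if u ∈ floating b B ∧ v ∈ floating b B then wt c B else 0) := by
    intro u v
    have hff : Finset.univ.filter (fun B : Finset (Sym2 V) =>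
        IsSF 2 B ∧ u ∈ floating b B ∧ v ∈ floating b B)
        = (Finset.univ.filter (IsSF 2)).filter
            (fun B => u ∈ floating b B ∧ v ∈ floating b B) := by
      rw [Finset.filter_filter]
    rw [FF, hff, Finset.sum_filter]
  have h2 : ∀ B : Finset (Sym2 V), (∑ u : V, ∑ v : V,
      if u ∈ floating b B ∧ v ∈ floating b B then wt c B else 0)
      = wt c B * ((floating b B).card : ℝ) ^ 2 := by
    intro B
    have hv : ∀ u : V, (∑ v : V, if u ∈ floating b B ∧ v ∈ floating b B then wt c B else 0)
        = if u ∈ floating b B then ((floating b B).card : ℝ) * wt c B else 0 := by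
      intro u
      by_cases hu : u ∈ floating b B
      · rw [if_pos hu]
        have heq : ∀ v : V, (if u ∈ floating b B ∧ v ∈ floating b B then wt c B else 0)
            = if v ∈ floating b B then wt c B else 0 := by
          intro v
          by_cases hvv : v ∈ floating b B
          · rw [if_pos ⟨hu, hvv⟩, if_pos hvv]
          · rw [if_neg (fun h => hvv h.2), if_neg hvv]
        rw [Finset.sum_congr rfl (fun v _ => heq v), Finset.sum_ite_mem,
          Finset.univ_inter, Finset.sum_const, nsmul_eq_mul]
      · rw [if_neg hu]
        apply Finset.sum_eq_zero
        intro v _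
        exact if_neg (fun h => hu h.1)
    rw [Finset.sum_congr rfl (fun u _ => hv u), Finset.sum_ite_mem, Finset.univ_inter,
      Finset.sum_const, nsmul_eq_mul]
    ring
  calc ∑ u : V, ∑ v : V, FF c b u v
      = ∑ u : V, ∑ B ∈ Finset.univ.filter (IsSF 2), ∑ v : V,
        (if u ∈ floating b B ∧ v ∈ floating b B then wt c B else 0) := by
        apply Finset.sum_congr rfl
        intro u _
        rw [Finset.sum_congr rfl (fun v _ => h1 u v), Finset.sum_comm]
    _ = ∑ B ∈ Finset.univ.filter (IsSF 2), ∑ u : V, ∑ v : V,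
        (if u ∈ floating b B ∧ v ∈ floating b B then wt c B else 0) := Finset.sum_comm
    _ = ∑ B ∈ Finset.univ.filter (IsSF 2), wt c B * ((floating b B).card : ℝ) ^ 2 :=
        Finset.sum_congr rfl (fun B _ => h2 B)

end TwoSF

open TwoSF

/-- For a finite connected undirected graph with positive
conductances and marked vertex `b`, the second moment of the number of
vertices of the floating component satisfies
`E(|Σ|²) = ℓ* · (|V|/(|V|-1)) · E(τ_b)`, where `ℓ* = κ(|V|-1)/κ₂` and
`E(τ_b) = (1/|V|) Σ_{u,v} G_{u,v}`. -/
theorem statement_9 {V : Type*} [Fintype V] [DecidableEq V] (c : Sym2 V → ℝ)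
    (hc : ∀ e, 0 ≤ c e) (hloop : ∀ v : V, c s(v, v) = 0)
    (hconn : ncomp (Finset.univ.filter fun e : Sym2 V => c e ≠ 0) = 1)
    (b : V) :
    expPow c b 2 =
      (kappa1 c * ((Fintype.card V : ℝ) - 1) / kappa2 c) *
        ((Fintype.card V : ℝ) / ((Fintype.card V : ℝ) - 1)) *
        ((∑ u : V, ∑ v : V, green c b u v) / (Fintype.card V : ℝ)) := by
  classical
  haveI : Nonempty V := ⟨b⟩
  by_cases hn1 : Fintype.card V = 1
  · have hzero : (∑ B ∈ Finset.univ.filter (IsSF 2),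
        wt c B * ((floating b B).card : ℝ) ^ 2) = 0 := by
      apply Finset.sum_eq_zero
      intro B hB
      rw [Finset.mem_filter] at hB
      have h := ncomp_le_card B
      have h2 := hB.2.1
      exact absurd rfl (by omega : ncomp B ≠ ncomp B)
    simp only [expPow]
    rw [hzero, zero_div, hn1]
    norm_num
  · have hn2 : 2 ≤ Fintype.card V := by
      have := Fintype.card_pos (α := V); omega
    have hκ1 : 0 < kappa1 c := kappa1_pos hc hconn
    have hκ2 : 0 < kappa2 c := kappa2_pos hc hconn hn2
    have hgreen : ∑ u : V, ∑ v : V, green c b u v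
        = (kappa1 c)⁻¹ * ∑ B ∈ Finset.univ.filter (IsSF 2),
            wt c B * ((floating b B).card : ℝ) ^ 2 := by
      rw [← sum_FF c b, Finset.mul_sum]
      apply Finset.sum_congr rfl
      intro u _
      rw [Finset.mul_sum]
      exact Finset.sum_congr rfl (fun v _ => green_eq c b (ne_of_gt hκ1) u v)
    simp only [expPow]
    rw [hgreen]
    have hn0 : (Fintype.card V : ℝ) ≠ 0 := by
      have : 0 < Fintype.card V := Fintype.card_pos
      exact_mod_cast this.ne'
    have hn1' : (Fintype.card V : ℝ) - 1 ≠ 0 := by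
      have h2 : (2 : ℝ) ≤ (Fintype.card V : ℝ) := by exact_mod_cast hn2
      intro h
      linarith
    have hκ1' : kappa1 c ≠ 0 := ne_of_gt hκ1
    have hκ2' : kappa2 c ≠ 0 := ne_of_gt hκ2
    field_simp
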